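/- Let N ≥ 1, let a ∈ ℝ, and let v₊, v₋, Δ₊, Δ₋, C₊, C₋ : ℝ² → M_N(ℝ) be continuously differentiable matrix-valued fields on a worldsheet ℝ² with light-cone partial derivatives ∂₊, ∂₋. Define A± := −(v± + Δ±) and B± := Δ± − v±, and for any matrix-valued field X define D±X := ∂±X + C±X − XC±. Suppose that at every point of ℝ²: (i) Δ₊v₋ = v₋Δ₊ and Δ₋v₊ = v₊Δ₋; (ii) D₊B₋ + D₋B₊ = 0; and (iii) D₊A₋ − D₋A₊ + a(A₊A₋ − A₋A₊) = 0. Then for every integer m ≥ 1, at every point of ℝ²: ∂₋ tr(v₊ᵐ) = m · tr(v₊^{m−1} ∂₊Δ₋) and ∂₊ tr(v₋ᵐ) = m · tr(v₋^{m−1} ∂₋Δ₊). -/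

import Mathlib

variable {N : ℕ}

/-- Entrywise partial derivative of a matrix-valued field on `ℝ²` in the
direction `w`. -/
noncomputable def mpd (w : ℝ × ℝ) (X : ℝ × ℝ → Matrix (Fin N) (Fin N) ℝ)
    (p : ℝ × ℝ) : Matrix (Fin N) (Fin N) ℝ :=
  Matrix.of fun i j => fderiv ℝ (fun q => X q i j) p w

/-- A matrix-valued field is continuously differentiable (entrywise). -/
def MatC1 (X : ℝ × ℝ → Matrix (Fin N) (Fin N) ℝ) : Prop :=
  ∀ i j, ContDiff ℝ 1 fun q => X q i j

/-- Covariant derivative `D X = ∂X + [C, X]` in the direction `w` with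
connection `C`. -/
noncomputable def covD (w : ℝ × ℝ) (C X : ℝ × ℝ → Matrix (Fin N) (Fin N) ℝ)
    (p : ℝ × ℝ) : Matrix (Fin N) (Fin N) ℝ :=
  mpd w X p + C p * X p - X p * C p

lemma MatC1.diffAt {X : ℝ × ℝ → Matrix (Fin N) (Fin N) ℝ} (hX : MatC1 X)
    (i j : Fin N) (p : ℝ × ℝ) : DifferentiableAt ℝ (fun q => X q i j) p :=
  ((hX i j).differentiable one_ne_zero).differentiableAt

lemma mpd_sub {X Y : ℝ × ℝ → Matrix (Fin N) (Fin N) ℝ} (hX : MatC1 X) (hY : MatC1 Y)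
    (w p) : mpd w (fun q => X q - Y q) p = mpd w X p - mpd w Y p := by
  ext i j
  simp only [mpd, Matrix.of_apply, Matrix.sub_apply]
  rw [fderiv_fun_sub (hX.diffAt i j p) (hY.diffAt i j p)]
  rfl

lemma mpd_negadd {X Y : ℝ × ℝ → Matrix (Fin N) (Fin N) ℝ} (hX : MatC1 X) (hY : MatC1 Y)
    (w p) : mpd w (fun q => -(X q + Y q)) p = -(mpd w X p + mpd w Y p) := by
  ext i j
  simp only [mpd, Matrix.of_apply, Matrix.neg_apply, Matrix.add_apply]
  rw [fderiv_fun_neg, fderiv_fun_add (hX.diffAt i j p) (hY.diffAt i j p)]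
  rfl

lemma MatC1.mul {X Y : ℝ × ℝ → Matrix (Fin N) (Fin N) ℝ} (hX : MatC1 X) (hY : MatC1 Y) :
    MatC1 (fun q => X q * Y q) := by
  intro i j
  have h : (fun q => (X q * Y q) i j) = fun q => ∑ k, X q i k * Y q k j := by
    funext q; rw [Matrix.mul_apply]
  rw [h]
  exact ContDiff.sum fun k _ => (hX i k).mul (hY k j)

lemma MatC1.pow {X : ℝ × ℝ → Matrix (Fin N) (Fin N) ℝ} (hX : MatC1 X) (m : ℕ) :
    MatC1 (fun q => X q ^ m) := by
  induction m with
  | zero => intro i j; simp only [pow_zero]; exact contDiff_const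
  | succ n ih =>
    have := ih.mul hX
    intro i j
    simpa only [pow_succ] using this i j

lemma mpd_mul {X Y : ℝ × ℝ → Matrix (Fin N) (Fin N) ℝ} (hX : MatC1 X) (hY : MatC1 Y)
    (w p) : mpd w (fun q => X q * Y q) p = mpd w X p * Y p + X p * mpd w Y p := by
  ext i j
  simp only [mpd, Matrix.of_apply, Matrix.add_apply, Matrix.mul_apply]
  rw [fderiv_fun_sum (A := fun k q => X q i k * Y q k j) (fun k _ => (hX.diffAt i k p).mul (hY.diffAt k j p))]
  rw [ContinuousLinearMap.sum_apply]
  rw [← Finset.sum_add_distrib]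
  refine Finset.sum_congr rfl fun k _ => ?_
  rw [fderiv_fun_mul (hX.diffAt i k p) (hY.diffAt k j p)]
  simp [smul_eq_mul]
  ring

lemma fderiv_trace {X : ℝ × ℝ → Matrix (Fin N) (Fin N) ℝ} (hX : MatC1 X) (w p) :
    fderiv ℝ (fun q => (X q).trace) p w = (mpd w X p).trace := by
  have h : (fun q => (X q).trace) = fun q => ∑ i, X q i i := by
    funext q; rfl
  rw [h, fderiv_fun_sum (fun i _ => hX.diffAt i i p)]
  simp [mpd, Matrix.trace, Matrix.diag]

lemma tr3 (V W Z : Matrix (Fin N) (Fin N) ℝ) (h : V * Z = Z * V) :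
    (V * (W * Z)).trace = (V * (Z * W)).trace := by
  rw [← mul_assoc, Matrix.trace_mul_comm, ← mul_assoc, ← h, mul_assoc]

lemma trace_pow_mpd {X : ℝ × ℝ → Matrix (Fin N) (Fin N) ℝ} (hX : MatC1 X) (w p) :
    ∀ m k : ℕ, (X p ^ k * mpd w (fun q => X q ^ m) p).trace
      = (m : ℝ) * (X p ^ (k + m - 1) * mpd w X p).trace := by
  intro m
  induction m with
  | zero =>
    intro k
    have h0 : mpd w (fun q => (1 : Matrix (Fin N) (Fin N) ℝ)) p = 0 := by
      ext i j
      simp [mpd, fderiv_const]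
    simp only [pow_zero, h0, mul_zero, Matrix.trace_zero, Nat.cast_zero, zero_mul]
  | succ n ih =>
    intro k
    have hps : (fun q => X q ^ (n + 1)) = fun q => X q * X q ^ n := by
      funext q; rw [pow_succ']
    rw [hps, mpd_mul hX (hX.pow n), mul_add, Matrix.trace_add]
    have h1 : (X p ^ k * (mpd w X p * X p ^ n)).trace
        = (X p ^ (k + n) * mpd w X p).trace := by
      rw [tr3 _ _ _ (Commute.pow_pow_self (X p) k n), ← mul_assoc, ← pow_add]
    have h2 : (X p ^ k * (X p * mpd w (fun q => X q ^ n) p)).trace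
        = (n : ℝ) * (X p ^ (k + n) * mpd w X p).trace := by
      rw [← mul_assoc, ← pow_succ]
      rw [ih (k + 1)]
      have e : k + 1 + n - 1 = k + n := by omega
      rw [e]
    rw [h1, h2]
    have : k + (n + 1) - 1 = k + n := by omega
    rw [this]
    push_cast
    ring

lemma fderiv_trace_pow {X : ℝ × ℝ → Matrix (Fin N) (Fin N) ℝ} (hX : MatC1 X) (w p) (m : ℕ) :
    fderiv ℝ (fun q => (X q ^ m).trace) p w
      = (m : ℝ) * (X p ^ (m - 1) * mpd w X p).trace := by
  rw [fderiv_trace (hX.pow m) w p]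
  have := trace_pow_mpd hX w p m 0
  simpa [pow_zero] using this

/-- The key identity of unified auxiliary-field sigma models:
`∂∓ tr(v±ᵐ) = m tr(v±^{m−1} ∂±Δ∓)`, given the common structure of the
equations of motion. Here `∂₊` is the derivative in direction `(1,0)` and
`∂₋` in direction `(0,1)`. -/
theorem stmt5 (N : ℕ) (hN : 1 ≤ N) (a : ℝ)
    (vp vm Δp Δm Cp Cm : ℝ × ℝ → Matrix (Fin N) (Fin N) ℝ)
    (hvp : MatC1 vp) (hvm : MatC1 vm) (hΔp : MatC1 Δp) (hΔm : MatC1 Δm)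
    (hCp : MatC1 Cp) (hCm : MatC1 Cm)
    (Ap Am Bp Bm : ℝ × ℝ → Matrix (Fin N) (Fin N) ℝ)
    (hAp : ∀ p, Ap p = -(vp p + Δp p)) (hAm : ∀ p, Am p = -(vm p + Δm p))
    (hBp : ∀ p, Bp p = Δp p - vp p) (hBm : ∀ p, Bm p = Δm p - vm p)
    (hcomm1 : ∀ p, Δp p * vm p = vm p * Δp p)
    (hcomm2 : ∀ p, Δm p * vp p = vp p * Δm p)
    (hB : ∀ p, covD (1, 0) Cp Bm p + covD (0, 1) Cm Bp p = 0)
    (hA : ∀ p, covD (1, 0) Cp Am p - covD (0, 1) Cm Ap p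
        + a • (Ap p * Am p - Am p * Ap p) = 0) :
    ∀ m : ℕ, 1 ≤ m → ∀ p : ℝ × ℝ,
      fderiv ℝ (fun q => Matrix.trace (vp q ^ m)) p (0, 1)
          = (m : ℝ) * Matrix.trace (vp p ^ (m - 1) * mpd (1, 0) Δm p) ∧
      fderiv ℝ (fun q => Matrix.trace (vm q ^ m)) p (1, 0)
          = (m : ℝ) * Matrix.trace (vm p ^ (m - 1) * mpd (0, 1) Δp p) := by
  obtain rfl : Ap = fun p => -(vp p + Δp p) := funext hAp
  obtain rfl : Am = fun p => -(vm p + Δm p) := funext hAm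
  obtain rfl : Bp = fun p => Δp p - vp p := funext hBp
  obtain rfl : Bm = fun p => Δm p - vm p := funext hBm
  intro m hm p
  have e1 := hB p
  have e2 := hA p
  simp only [covD] at e1 e2
  rw [mpd_sub hΔm hvm, mpd_sub hΔp hvp] at e1
  rw [mpd_negadd hvm hΔm, mpd_negadd hvp hΔp] at e2
  -- commutation facts
  have cvp : vp p ^ (m - 1) * vp p = vp p * vp p ^ (m - 1) :=
    ((Commute.refl (vp p)).pow_left (m - 1)).eq
  have cΔm : vp p ^ (m - 1) * Δm p = Δm p * vp p ^ (m - 1) :=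
    (Commute.pow_left (hcomm2 p).symm (m - 1)).eq
  have cvm : vm p ^ (m - 1) * vm p = vm p * vm p ^ (m - 1) :=
    ((Commute.refl (vm p)).pow_left (m - 1)).eq
  have cΔp : vm p ^ (m - 1) * Δp p = Δp p * vm p ^ (m - 1) :=
    (Commute.pow_left (hcomm1 p).symm (m - 1)).eq
  constructor
  · -- first identity
    set V := vp p ^ (m - 1) with hV
    have zc1 : (V * (Cp p * Δm p)).trace = (V * (Δm p * Cp p)).trace :=
      tr3 _ _ _ cΔm
    have zc2 : (V * (Cm p * vp p)).trace = (V * (vp p * Cm p)).trace :=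
      tr3 _ _ _ cvp
    have z3a : (V * (vp p * vm p)).trace = (V * (vm p * vp p)).trace :=
      (tr3 _ (vm p) (vp p) cvp).symm
    have z3b : (V * (vp p * Δm p)).trace = (V * (Δm p * vp p)).trace := by
      rw [← hcomm2 p]
    have z3c : (V * (Δp p * vm p)).trace = (V * (vm p * Δp p)).trace := by
      rw [hcomm1 p]
    have z3d : (V * (Δp p * Δm p)).trace = (V * (Δm p * Δp p)).trace :=
      tr3 _ (Δp p) (Δm p) cΔm
    have t1 := congrArg (fun Z : Matrix (Fin N) (Fin N) ℝ => (V * Z).trace) e1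
    have t2 := congrArg (fun Z : Matrix (Fin N) (Fin N) ℝ => (V * Z).trace) e2
    simp only [mul_add, mul_sub, add_mul, sub_mul, neg_mul, mul_neg, neg_neg,
      mul_smul_comm, smul_sub, Matrix.trace_add, Matrix.trace_sub,
      Matrix.trace_neg, Matrix.trace_smul, smul_eq_mul, mul_zero,
      Matrix.trace_zero] at t1 t2
    have key : (V * mpd (0, 1) vp p).trace = (V * mpd (1, 0) Δm p).trace := by
      linear_combination (-(1:ℝ)/2) * t1 + ((1:ℝ)/2) * t2 + zc1 - zc2
        - (a/2) * (z3a + z3b + z3c + z3d)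
    rw [fderiv_trace_pow hvp (0, 1) p m]
    rw [show Matrix.trace (vp p ^ (m-1) * mpd (0,1) vp p) = (V * mpd (0,1) vp p).trace from rfl,
      key]
  · -- second identity
    set V := vm p ^ (m - 1) with hV
    have zc1 : (V * (Cm p * Δp p)).trace = (V * (Δp p * Cm p)).trace :=
      tr3 _ _ _ cΔp
    have zc2 : (V * (Cp p * vm p)).trace = (V * (vm p * Cp p)).trace :=
      tr3 _ _ _ cvm
    have z3a : (V * (vp p * vm p)).trace = (V * (vm p * vp p)).trace :=
      tr3 _ (vp p) (vm p) cvm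
    have z3b : (V * (vp p * Δm p)).trace = (V * (Δm p * vp p)).trace := by
      rw [← hcomm2 p]
    have z3c : (V * (Δp p * vm p)).trace = (V * (vm p * Δp p)).trace := by
      rw [hcomm1 p]
    have z3d : (V * (Δp p * Δm p)).trace = (V * (Δm p * Δp p)).trace :=
      (tr3 _ (Δm p) (Δp p) cΔp).symm
    have t1 := congrArg (fun Z : Matrix (Fin N) (Fin N) ℝ => (V * Z).trace) e1
    have t2 := congrArg (fun Z : Matrix (Fin N) (Fin N) ℝ => (V * Z).trace) e2
    simp only [mul_add, mul_sub, add_mul, sub_mul, neg_mul, mul_neg, neg_neg,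
      mul_smul_comm, smul_sub, Matrix.trace_add, Matrix.trace_sub,
      Matrix.trace_neg, Matrix.trace_smul, smul_eq_mul, mul_zero,
      Matrix.trace_zero] at t1 t2
    have key : (V * mpd (1, 0) vm p).trace = (V * mpd (0, 1) Δp p).trace := by
      linear_combination (-(1:ℝ)/2) * t1 + (-(1:ℝ)/2) * t2 - zc2 + zc1
        + (a/2) * (z3a + z3b + z3c + z3d)
    rw [fderiv_trace_pow hvm (1, 0) p m]
    rw [show Matrix.trace (vm p ^ (m-1) * mpd (1,0) vm p) = (V * mpd (1,0) vm p).trace from rfl,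
      key]
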